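/- A monoid M is finitely generated if and only if every recognizable subset of M is rational (McKnight's theorem). -/

import Mathlib

open Pointwise
/-- The rational subsets of a monoid `M`: the smallest family of subsets
containing all finite subsets and closed under union, product, and Kleene star
(the submonoid generated by a set). -/
inductive IsRat {M : Type*} [Monoid M] : Set M → Prop
  | finite (S : Set M) : S.Finite → IsRat S
  | union {S T : Set M} : IsRat S → IsRat T → IsRat (S ∪ T)
  | mul {S T : Set M} : IsRat S → IsRat T → IsRat (S * T)
  | star {S : Set M} : IsRat S → IsRat (Submonoid.closure S : Set M)

/-- A subset `L` of a monoid `M` is recognizable if it is saturated by a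
homomorphism to some finite monoid. -/
def IsRec {M : Type*} [Monoid M] (L : Set M) : Prop :=
  ∃ (N : Type) (_ : Monoid N) (_ : Finite N) (φ : M →* N), φ ⁻¹' (φ '' L) = L

section McKnightAux

variable {M : Type*} [Monoid M] {N : Type*} [Monoid N] (φ : M →* N)

/-- The state reached after reading the first `i` letters of `l`, starting at `p`. -/
def stA (p : N) (l : List M) (i : ℕ) : N := p * φ ((l.take i).prod)

/-- `l` is a run from `p` to `q` whose internal states all lie in `K`. -/
def Good (p q : N) (K : Set N) (l : List M) : Prop :=
  p * φ l.prod = q ∧ ∀ i, 0 < i → i < l.length → stA φ p l i ∈ K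

/-- Products of `A`-words running from `p` to `q` with internal states in `K`. -/
def RSet (A : Set M) (K : Set N) (p q : N) : Set M :=
  {m | ∃ l : List M, (∀ a ∈ l, a ∈ A) ∧ l.prod = m ∧ Good φ p q K l}

variable {φ}

lemma Good.mono {p q : N} {K K' : Set N} {l : List M} (h : Good φ p q K l) (hK : K ⊆ K') :
    Good φ p q K' l :=
  ⟨h.1, fun i h1 h2 => hK (h.2 i h1 h2)⟩

lemma RSet.mono {A : Set M} {K K' : Set N} {p q : N} (hK : K ⊆ K') :
    RSet φ A K p q ⊆ RSet φ A K' p q :=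
  fun _ ⟨l, h1, h2, h3⟩ => ⟨l, h1, h2, h3.mono hK⟩

lemma Good.append {p q s : N} {K : Set N} {u v : List M}
    (hu : Good φ p q K u) (hv : Good φ q s K v) :
    Good φ p s (insert q K) (u ++ v) := by
  constructor
  · rw [List.prod_append, map_mul, ← mul_assoc, hu.1, hv.1]
  · intro i h1 h2
    rcases lt_or_ge i u.length with h | h
    · have key : stA φ p (u ++ v) i = stA φ p u i := by
        unfold stA; rw [List.take_append_of_le_length h.le]
      rw [key]; exact Set.mem_insert_iff.mpr (Or.inr (hu.2 i h1 h))
    · rcases Nat.exists_eq_add_of_le h with ⟨j, rfl⟩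
      have key : stA φ p (u ++ v) (u.length + j) = stA φ q v j := by
        unfold stA
        rw [List.take_length_add_append, List.prod_append, map_mul, ← mul_assoc, hu.1]
      rw [key]
      rcases Nat.eq_zero_or_pos j with rfl | hj
      · have : stA φ q v 0 = q := by simp [stA]
        rw [this]; exact Set.mem_insert _ _
      · have hjv : j < v.length := by
          have h2' := h2; rw [List.length_append] at h2'; omega
        exact Set.mem_insert_iff.mpr (Or.inr (hv.2 j hj hjv))

lemma good_take {p : N} {K : Set N} {l : List M} {i₀ : ℕ} (hle : i₀ ≤ l.length)
    (hK : ∀ j, 0 < j → j < i₀ → stA φ p l j ∈ K) :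
    Good φ p (stA φ p l i₀) K (l.take i₀) := by
  constructor
  · rfl
  · intro j h1 h2
    rw [List.length_take] at h2
    have hj : j < i₀ := lt_of_lt_of_le h2 (min_le_left _ _)
    have key : stA φ p (l.take i₀) j = stA φ p l j := by
      unfold stA; rw [List.take_take, min_eq_left hj.le]
    rw [key]; exact hK j h1 hj

lemma good_drop {p q : N} {K : Set N} {l : List M} {i₀ : ℕ} (hle : i₀ ≤ l.length)
    (hq : p * φ l.prod = q)
    (hK : ∀ j, i₀ < j → j < l.length → stA φ p l j ∈ K) :
    Good φ (stA φ p l i₀) q K (l.drop i₀) := by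
  constructor
  · show p * φ ((l.take i₀).prod) * φ ((l.drop i₀).prod) = q
    rw [mul_assoc, ← map_mul, List.prod_take_mul_prod_drop, hq]
  · intro j h1 h2
    have key : stA φ (stA φ p l i₀) (l.drop i₀) j = stA φ p l (i₀ + j) := by
      show p * φ ((l.take i₀).prod) * φ (((l.drop i₀).take j).prod) = _
      unfold stA
      rw [List.take_add, List.prod_append, map_mul, ← mul_assoc]
    rw [key]
    rw [List.length_drop] at h2
    exact hK _ (by omega) (by omega)

lemma rset_empty_subset {A : Set M} {p q : N} : RSet φ A ∅ p q ⊆ {1} ∪ A := by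
  rintro m ⟨l, hA, rfl, hg⟩
  match l, hg with
  | [], _ => left; simp
  | [a], _ =>
    right; simpa using hA a (by simp)
  | a :: b :: l, hg =>
    exact absurd (hg.2 1 one_pos (by simp)) (Set.notMem_empty _)

lemma closure_good {A : Set M} {K : Set N} {r : N} {m : M}
    (hm : m ∈ Submonoid.closure (RSet φ A K r r)) :
    ∃ l : List M, (∀ a ∈ l, a ∈ A) ∧ l.prod = m ∧ Good φ r r (insert r K) l := by
  obtain ⟨L, hL, rfl⟩ := Submonoid.exists_list_of_mem_closure hm
  clear hm
  induction L with
  | nil =>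
    exact ⟨[], by simp, by simp, ⟨by simp, fun i h1 h2 => absurd h2 (by simp)⟩⟩
  | cons x L ih =>
    obtain ⟨l₂, h₂A, h₂p, h₂g⟩ := ih (fun y hy => hL y (List.mem_cons_of_mem _ hy))
    obtain ⟨l₁, h₁A, h₁p, h₁g⟩ := hL x List.mem_cons_self
    refine ⟨l₁ ++ l₂, ?_, by simp [h₁p, h₂p], ?_⟩
    · intro a ha
      rcases List.mem_append.mp ha with h | h
      exacts [h₁A a h, h₂A a h]
    · have key := (h₁g.mono (Set.subset_insert r K)).append h₂g
      rwa [Set.insert_idem] at key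

lemma keyB {A : Set M} {K : Set N} {r q : N} (n : ℕ) :
    ∀ l : List M, l.length ≤ n → (∀ a ∈ l, a ∈ A) → Good φ r q (insert r K) l →
      l.prod ∈ (Submonoid.closure (RSet φ A K r r) : Set M) * RSet φ A K r q := by
  induction n using Nat.strong_induction_on with
  | _ n ih =>
    intro l hn hA hg
    by_cases hall : ∀ j, 0 < j → j < l.length → stA φ r l j ∈ K
    · exact Set.mem_mul.mpr ⟨1, one_mem _, l.prod, ⟨l, hA, rfl, hg.1, hall⟩, one_mul _⟩
    · push_neg at hall
      obtain ⟨j, hj1, hj2, hj3⟩ := hall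
      classical
      have hex : ∃ j, 0 < j ∧ j < l.length ∧ stA φ r l j ∉ K := ⟨j, hj1, hj2, hj3⟩
      obtain ⟨hi1, hi2, hi3⟩ := Nat.find_spec hex
      set i₀ := Nat.find hex with hi₀def
      have hr : stA φ r l i₀ = r := by
        rcases Set.mem_insert_iff.mp (hg.2 i₀ hi1 hi2) with h | h
        · exact h
        · exact absurd h hi3
      have hmin : ∀ j, 0 < j → j < i₀ → stA φ r l j ∈ K := by
        intro j h1 h2
        by_contra hc
        exact Nat.find_min hex h2 ⟨h1, h2.trans hi2, hc⟩
      have hg1 : Good φ r r K (l.take i₀) := by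
        have key := good_take (φ := φ) hi2.le hmin
        rwa [hr] at key
      have hg2 : Good φ r q (insert r K) (l.drop i₀) := by
        have key := good_drop (φ := φ) hi2.le hg.1
          (fun j h1 h2 => hg.2 j (lt_of_le_of_lt (Nat.zero_le i₀) h1) h2)
        rwa [hr] at key
      have h2 := ih (l.drop i₀).length (by rw [List.length_drop]; omega) (l.drop i₀) le_rfl
        (fun a ha => hA a (List.drop_subset _ _ ha)) hg2
      obtain ⟨x, hx, y, hy, hxy⟩ := Set.mem_mul.mp h2
      refine Set.mem_mul.mpr ⟨(l.take i₀).prod * x, ?_, y, hy, ?_⟩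
      · exact Submonoid.mul_mem _
          (Submonoid.subset_closure ⟨l.take i₀, fun a ha => hA a (List.take_subset _ _ ha),
            rfl, hg1⟩) hx
      · rw [mul_assoc, hxy, List.prod_take_mul_prod_drop]

lemma rset_insert {A : Set M} {K : Set N} {r p q : N} :
    RSet φ A (insert r K) p q =
      RSet φ A K p q ∪
        RSet φ A K p r * (Submonoid.closure (RSet φ A K r r) : Set M) * RSet φ A K r q := by
  apply Set.Subset.antisymm
  · rintro m ⟨l, hA, rfl, hg⟩
    by_cases hall : ∀ j, 0 < j → j < l.length → stA φ p l j ∈ K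
    · exact Or.inl ⟨l, hA, rfl, hg.1, hall⟩
    · right
      push_neg at hall
      obtain ⟨j, hj1, hj2, hj3⟩ := hall
      classical
      have hex : ∃ j, 0 < j ∧ j < l.length ∧ stA φ p l j ∉ K := ⟨j, hj1, hj2, hj3⟩
      obtain ⟨hi1, hi2, hi3⟩ := Nat.find_spec hex
      set i₀ := Nat.find hex with hi₀def
      have hr : stA φ p l i₀ = r := by
        rcases Set.mem_insert_iff.mp (hg.2 i₀ hi1 hi2) with h | h
        · exact h
        · exact absurd h hi3
      have hmin : ∀ j, 0 < j → j < i₀ → stA φ p l j ∈ K := by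
        intro j h1 h2
        by_contra hc
        exact Nat.find_min hex h2 ⟨h1, h2.trans hi2, hc⟩
      have hg1 : Good φ p r K (l.take i₀) := by
        have key := good_take (φ := φ) hi2.le hmin
        rwa [hr] at key
      have hg2 : Good φ r q (insert r K) (l.drop i₀) := by
        have key := good_drop (φ := φ) hi2.le hg.1
          (fun j h1 h2 => hg.2 j (lt_of_le_of_lt (Nat.zero_le i₀) h1) h2)
        rwa [hr] at key
      have h2 := keyB (φ := φ) (l.drop i₀).length (l.drop i₀) le_rfl
        (fun a ha => hA a (List.drop_subset _ _ ha)) hg2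
      obtain ⟨x, hx, y, hy, hxy⟩ := Set.mem_mul.mp h2
      rw [mul_assoc]
      refine Set.mem_mul.mpr ⟨(l.take i₀).prod,
        ⟨l.take i₀, fun a ha => hA a (List.take_subset _ _ ha), rfl, hg1⟩,
        x * y, Set.mem_mul.mpr ⟨x, hx, y, hy, rfl⟩, ?_⟩
      rw [hxy, List.prod_take_mul_prod_drop]
  · rintro m (⟨l, hA, rfl, hg⟩ | hm)
    · exact ⟨l, hA, rfl, hg.mono (Set.subset_insert _ _)⟩
    · rw [mul_assoc] at hm
      obtain ⟨u, hu, z, hz, rfl⟩ := Set.mem_mul.mp hm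
      obtain ⟨lu, huA, rfl, hgu⟩ := hu
      obtain ⟨x, hx, y, hy, rfl⟩ := Set.mem_mul.mp hz
      obtain ⟨lv, hvA, rfl, hgv⟩ := hy
      obtain ⟨lm, hmA, hmp, hmg⟩ := closure_good (φ := φ) hx
      refine ⟨lu ++ (lm ++ lv), ?_, by simp [hmp], ?_⟩
      · intro a ha
        rcases List.mem_append.mp ha with h | h
        · exact huA a h
        rcases List.mem_append.mp h with h | h
        exacts [hmA a h, hvA a h]
      · have g2 : Good φ r q (insert r K) (lm ++ lv) := by
          have key := hmg.append (hgv.mono (Set.subset_insert _ _))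
          rwa [Set.insert_idem] at key
        have key := (hgu.mono (Set.subset_insert _ _)).append g2
        rwa [Set.insert_idem] at key

lemma rset_isRat {A : Set M} (hA : A.Finite) [Fintype N] [DecidableEq N] (K : Finset N) :
    ∀ p q : N, IsRat (RSet φ A (↑K : Set N) p q) := by
  induction K using Finset.induction_on with
  | empty =>
    intro p q
    refine IsRat.finite _ (Set.Finite.subset ((Set.finite_singleton 1).union hA) ?_)
    rw [Finset.coe_empty]
    exact rset_empty_subset
  | @insert r K hr ih =>
    intro p q
    rw [Finset.coe_insert, rset_insert]
    exact ((ih p q).union (((ih p r).mul (IsRat.star (ih r r))).mul (ih r q)))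

lemma preimage_singleton_isRat {A : Set M} (hA : A.Finite)
    (hgen : Submonoid.closure A = ⊤) [Fintype N] (n : N) :
    IsRat (φ ⁻¹' {n}) := by
  classical
  have key : φ ⁻¹' {n} = RSet φ A (↑(Finset.univ : Finset N)) 1 n := by
    ext m
    simp only [Set.mem_preimage, Set.mem_singleton_iff]
    constructor
    · intro h
      have hm : m ∈ Submonoid.closure A := by rw [hgen]; trivial
      obtain ⟨l, hl, hp⟩ := Submonoid.exists_list_of_mem_closure hm
      exact ⟨l, hl, hp, by rw [one_mul, hp, h], fun i _ _ => by simp⟩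
    · rintro ⟨l, -, rfl, hg1, -⟩
      rw [← hg1, one_mul]
  rw [key]
  exact rset_isRat hA Finset.univ 1 n

lemma isRat_biUnion {ι : Type*} (t : Finset ι) (f : ι → Set M)
    (hf : ∀ i, IsRat (f i)) : IsRat (⋃ i ∈ t, f i) := by
  classical
  induction t using Finset.induction_on with
  | empty =>
    have h : ⋃ i ∈ (∅ : Finset ι), f i = ∅ := by simp
    rw [h]
    exact IsRat.finite ∅ Set.finite_empty
  | @insert a s ha ih =>
    rw [Finset.set_biUnion_insert]
    exact (hf a).union ih

end McKnightAux

/-- McKnight's theorem: a monoid `M` is finitely generated if and only if every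
recognizable subset of `M` is rational. -/
theorem stmt13 (M : Type) [Monoid M] :
    Monoid.FG M ↔ ∀ L : Set M, IsRec L → IsRat L := by
  constructor
  · rintro hFG L ⟨N, instN, instF, φ, hL⟩
    obtain ⟨A, hgen, hfin⟩ := Monoid.fg_iff.mp hFG
    classical
    haveI : Fintype N := Fintype.ofFinite N
    have key : ∀ n : N, IsRat (φ ⁻¹' {n}) := preimage_singleton_isRat hfin hgen
    have hrw : L = ⋃ n ∈ Finset.univ.filter (fun n : N => n ∈ φ '' L), φ ⁻¹' {n} := by
      ext m
      simp only [Set.mem_iUnion, Finset.mem_filter, Finset.mem_univ, true_and,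
        Set.mem_preimage, Set.mem_singleton_iff, exists_prop]
      constructor
      · intro hm
        exact ⟨φ m, ⟨m, hm, rfl⟩, rfl⟩
      · rintro ⟨n, hn, h⟩
        rw [← hL]
        exact Set.mem_preimage.mpr (h ▸ hn)
    rw [hrw]
    exact isRat_biUnion _ _ key
  · intro h
    have hrec : IsRec (Set.univ : Set M) :=
      ⟨PUnit, inferInstance, inferInstance, 1,
        Set.eq_univ_of_forall fun m => ⟨m, trivial, rfl⟩⟩
    have bound : ∀ S : Set M, IsRat S → ∃ T : Set M, T.Finite ∧ S ⊆ ↑(Submonoid.closure T) := by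
      intro S hS
      induction hS with
      | finite S hS => exact ⟨S, hS, Submonoid.subset_closure⟩
      | union h1 h2 ih1 ih2 =>
        obtain ⟨T1, hf1, hs1⟩ := ih1
        obtain ⟨T2, hf2, hs2⟩ := ih2
        refine ⟨T1 ∪ T2, hf1.union hf2, Set.union_subset ?_ ?_⟩
        · exact hs1.trans (SetLike.coe_subset_coe.mpr
            (Submonoid.closure_mono Set.subset_union_left))
        · exact hs2.trans (SetLike.coe_subset_coe.mpr
            (Submonoid.closure_mono Set.subset_union_right))
      | mul h1 h2 ih1 ih2 =>
        obtain ⟨T1, hf1, hs1⟩ := ih1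
        obtain ⟨T2, hf2, hs2⟩ := ih2
        refine ⟨T1 ∪ T2, hf1.union hf2, ?_⟩
        intro m hm
        obtain ⟨x, hx, y, hy, rfl⟩ := Set.mem_mul.mp hm
        exact Submonoid.mul_mem _
          (Submonoid.closure_mono Set.subset_union_left (hs1 hx))
          (Submonoid.closure_mono Set.subset_union_right (hs2 hy))
      | star h ih =>
        obtain ⟨T, hf, hs⟩ := ih
        exact ⟨T, hf, SetLike.coe_subset_coe.mpr (Submonoid.closure_le.mpr hs)⟩
    obtain ⟨T, hTf, hT⟩ := bound _ (h Set.univ hrec)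
    rw [Monoid.fg_iff]
    refine ⟨T, ?_, hTf⟩
    rw [eq_top_iff]
    intro m _
    exact hT (Set.mem_univ m)
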